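/- Let ρ ∈ GL_n(ℝ) be the cyclic shift permutation matrix (ρ_{1,n} = 1, ρ_{i+1,i} = 1, all other entries 0). In the real closed-field setting F = ℝ((ε₁))···((ε_n)) with lexicographic order on monomials, the Shintani polyhedral cone function satisfies σ_n^{Sh}(1, ρ, ..., ρ^{n-1}) = χ_{(ℝ^+)^n}, the characteristic function of the open positive orthant. -/

import Mathlib

/-- Auxiliary: a finite sum of infinitesimals is infinitesimal. -/
lemma aux_inf_sum {F : Type} [Field F] [LinearOrder F] [IsStrictOrderedRing F] (φ : ℝ →+* F)
    (hφp : ∀ r : ℝ, 0 < r → 0 < φ r)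
    {ι : Type} (s : Finset ι) (f : ι → F)
    (h : ∀ i ∈ s, ∀ r : ℝ, 0 < r → |f i| < φ r) :
    ∀ r : ℝ, 0 < r → |∑ i ∈ s, f i| < φ r := by
  classical
  revert h
  induction s using Finset.induction_on with
  | empty => intro _ r hr; simpa using hφp r hr
  | @insert a s hnotmem ih =>
      intro h r hr
      rw [Finset.sum_insert hnotmem]
      have h1 := h a (Finset.mem_insert_self a s) (r / 2) (by linarith)
      have h2 := ih (fun i hi r hr => h i (Finset.mem_insert_of_mem hi) r hr) (r / 2)
        (by linarith)
      calc |f a + ∑ i ∈ s, f i| ≤ |f a| + |∑ i ∈ s, f i| := abs_add_le _ _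
        _ < φ (r / 2) + φ (r / 2) := add_lt_add h1 h2
        _ = φ r := by rw [← map_add]; norm_num

open Classical in
/-- Proposition 3.4: in the ordered-field setting `F = ℝ((ε₁))⋯((ε_n))` (formalized as any
linearly ordered field `F` with an order embedding `φ : ℝ →+* F` and positive elements
`ε₁, …, ε_n` such that `ε₁` is infinitesimal and each `ε_j` (`j > i`) is infinitesimally
smaller than every power of `ε_i`), the Shintani polyhedral cone function evaluated at
`(1, ρ, …, ρ^{n-1})` for the cyclic shift `ρ` is the characteristic function of the open
positive orthant: here `M` is the matrix with `j`-th column `ρ^{j-1}·b(ε_j)`,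
`b(ε) = (1, ε, …, ε^{n-1})ᵀ`, i.e. `M_{r,j} = ε_j^{(r-j) mod n}`, and for `w ∈ ℝⁿ \ {0}`
the cone value `c(columns of M)(w)` — `sign det M` if `w = Σ λ_j v_j` with all `λ_j > 0`
in `F`, and `0` otherwise — equals `1` if all `w_i > 0` and `0` otherwise. -/
theorem shintani_cone_at_shift
    (n : ℕ) (hn : 1 ≤ n)
    (F : Type) [Field F] [LinearOrder F] [IsStrictOrderedRing F] (φ : ℝ →+* F) (hφ : StrictMono φ)
    (ε : Fin n → F)
    (hpos : ∀ i, 0 < ε i)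
    (hsmall : ∀ r : ℝ, 0 < r → ε ⟨0, hn⟩ < φ r)
    (hchain : ∀ i j : Fin n, i < j → ∀ (r : ℝ) (k : ℕ), 0 < r → ε j < φ r * (ε i) ^ k)
    (M : Matrix (Fin n) (Fin n) F)
    (hM : ∀ r j : Fin n, M r j = (ε j) ^ ((n + (r : ℕ) - (j : ℕ)) % n))
    (w : Fin n → ℝ) (hw : w ≠ 0) :
    (if ∃ lam : Fin n → F, (∀ j, 0 < lam j) ∧ (∀ r, φ (w r) = ∑ j, lam j * M r j)
      then (if 0 < M.det then (1 : ℤ) else if M.det < 0 then -1 else 0)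
      else 0)
    = (if ∀ i, 0 < w i then 1 else 0) := by
  classical
  have hne : Nonempty (Fin n) := ⟨⟨0, hn⟩⟩
  -- basic facts about φ
  have hφpos : ∀ r : ℝ, 0 < r → 0 < φ r := by
    intro r hr
    have := hφ hr
    rwa [map_zero] at this
  have hφmono : Monotone φ := hφ.monotone
  have hφabs : ∀ x : ℝ, |φ x| = φ |x| := by
    intro x
    rcases le_or_gt 0 x with h | h
    · rw [abs_of_nonneg h, abs_of_nonneg]
      have := hφmono h
      rwa [map_zero] at this
    · rw [abs_of_neg h, abs_of_neg, ← map_neg]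
      have := hφ h
      rwa [map_zero] at this
  -- every ε i is infinitesimal
  have hεinf : ∀ (i : Fin n) (r : ℝ), 0 < r → ε i < φ r := by
    intro i r hr
    rcases Nat.eq_zero_or_pos (i : ℕ) with h0 | h0
    · have hi : i = ⟨0, hn⟩ := Fin.ext h0
      rw [hi]; exact hsmall r hr
    · have := hchain ⟨0, hn⟩ i h0 r 0 hr
      simpa using this
  have hε1 : ∀ i, ε i < 1 := fun i => by
    have := hεinf i 1 one_pos; rwa [map_one] at this
  -- matrix entry facts
  have hMpos : ∀ r j, 0 < M r j := fun r j => by rw [hM]; exact pow_pos (hpos j) _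
  have hMle1 : ∀ r j, M r j ≤ 1 := fun r j => by
    rw [hM]; exact pow_le_one₀ (hpos j).le (hε1 j).le
  have hMdiag : ∀ i, M i i = 1 := fun i => by
    rw [hM, Nat.add_sub_cancel, Nat.mod_self, pow_zero]
  have hMoff : ∀ a b : Fin n, a ≠ b → M a b ≤ ε b := by
    intro a b hab
    rw [hM]
    refine pow_le_of_le_one (hpos b).le (hε1 b).le ?_
    intro h0
    have hne' : (a : ℕ) ≠ (b : ℕ) := fun h => hab (Fin.ext h)
    have ha := a.isLt; have hb := b.isLt
    obtain ⟨k, hk⟩ := Nat.dvd_of_mod_eq_zero h0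
    rcases Nat.lt_or_ge k 2 with hk2 | hk2
    · interval_cases k <;> omega
    · have h2 : n * 2 ≤ n * k := Nat.mul_le_mul_left n hk2
      have h3 : n + (a : ℕ) - (b : ℕ) < n * 2 := by omega
      rw [hk] at h3
      exact absurd h3 (not_lt.mpr h2)
  -- bound on w
  set C : ℝ := 1 + ∑ i, |w i| with hC
  have hCpos : 0 < C := by positivity
  have hwC : ∀ r, |w r| ≤ C := by
    intro r
    have h1 : |w r| ≤ ∑ i, |w i| :=
      Finset.single_le_sum (f := fun i => |w i|) (fun i _ => abs_nonneg _) (Finset.mem_univ r)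
    simp only [hC]; linarith
  -- infinitesimal times bounded is infinitesimal
  have hinfmul : ∀ (x y : F) (c : ℝ), 0 < c → (∀ r : ℝ, 0 < r → |x| < φ r) →
      |y| ≤ φ c → ∀ r : ℝ, 0 < r → |x * y| < φ r := by
    intro x y c hc hx hy r hr
    have h1 : |x * y| ≤ |x| * φ c := by
      rw [abs_mul]
      exact mul_le_mul_of_nonneg_left hy (abs_nonneg x)
    have h2 : |x| * φ c < φ (r / c) * φ c :=
      mul_lt_mul_of_pos_right (hx (r / c) (by positivity)) (hφpos c hc)
    have h3 : φ (r / c) * φ c = φ r := by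
      rw [← map_mul, div_mul_cancel₀ _ (ne_of_gt hc)]
    calc |x * y| ≤ |x| * φ c := h1
      _ < φ (r / c) * φ c := h2
      _ = φ r := h3
  -- a nontrivial permutation moves a point distinct from any prescribed j,
  -- or rather: it moves at least two points
  have hmove : ∀ (σ : Equiv.Perm (Fin n)) (j : Fin n), σ ≠ 1 →
      ∃ i, i ≠ j ∧ σ i ≠ i := by
    intro σ j hσ
    obtain ⟨a, ha⟩ : ∃ a, σ a ≠ a := by
      by_contra h
      push_neg at h
      exact hσ (Equiv.ext h)
    by_cases haj : a = j
    · refine ⟨σ a, ?_, ?_⟩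
      · rw [← haj]; exact ha
      · intro h; exact ha (σ.injective h)
    · exact ⟨a, haj, ha⟩
  -- determinant of M: identity term 1, nonidentity terms infinitesimal
  have hdet1 : M.det = 1 + ∑ σ ∈ Finset.univ.erase (1 : Equiv.Perm (Fin n)),
      (((Equiv.Perm.sign σ : ℤ) : F) * ∏ i, M (σ i) i) := by
    rw [Matrix.det_apply',
      ← Finset.add_sum_erase _ _ (Finset.mem_univ (1 : Equiv.Perm (Fin n)))]
    congr 1
    simp [hMdiag]
  have habs_sign : ∀ σ : Equiv.Perm (Fin n), |((Equiv.Perm.sign σ : ℤ) : F)| = 1 := by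
    intro σ
    rcases Int.units_eq_one_or (Equiv.Perm.sign σ) with h | h <;> simp [h]
  have hδ : ∀ r : ℝ, 0 < r →
      |∑ σ ∈ Finset.univ.erase (1 : Equiv.Perm (Fin n)),
        (((Equiv.Perm.sign σ : ℤ) : F) * ∏ i, M (σ i) i)| < φ r := by
    refine aux_inf_sum φ hφpos _ _ ?_
    intro σ hσmem r hr
    have hσ : σ ≠ 1 := (Finset.mem_erase.mp hσmem).1
    obtain ⟨i, _, hi⟩ := hmove σ ⟨0, hn⟩ hσ
    have hple : ∏ i', M (σ i') i' ≤ ε i := by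
      have hle : ∏ i', M (σ i') i' ≤ ∏ i', (if i' = i then ε i else 1) := by
        refine Finset.prod_le_prod (fun _ _ => (hMpos _ _).le) ?_
        intro i' _
        by_cases h : i' = i
        · subst h; rw [if_pos rfl]; exact hMoff _ _ hi
        · rw [if_neg h]; exact hMle1 _ _
      rwa [Finset.prod_ite_eq', if_pos (Finset.mem_univ i)] at hle
    have habs : |((Equiv.Perm.sign σ : ℤ) : F) * ∏ i', M (σ i') i'|
        = ∏ i', M (σ i') i' := by
      rw [abs_mul, habs_sign, one_mul,
        abs_of_pos (Finset.prod_pos fun _ _ => hMpos _ _)]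
    rw [habs]
    exact lt_of_le_of_lt hple (hεinf i r hr)
  have hdetpos : 0 < M.det := by
    have h := hδ 1 one_pos
    rw [map_one] at h
    have h' := abs_lt.mp h
    rw [hdet1]
    linarith [h'.1]
  have hdetne : M.det ≠ 0 := ne_of_gt hdetpos
  -- the real vector embedded in F
  set b : Fin n → F := fun r => φ (w r) with hb
  have hbC : ∀ r, |b r| ≤ φ C := fun r => by
    rw [hb]; simp only; rw [hφabs]; exact hφmono (hwC r)
  -- determinant of the column-replaced matrices
  have hN1 : ∀ j : Fin n, (M.updateCol j b).det = φ (w j) +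
      ∑ σ ∈ Finset.univ.erase (1 : Equiv.Perm (Fin n)),
        (((Equiv.Perm.sign σ : ℤ) : F) * ∏ i, (M.updateCol j b) (σ i) i) := by
    intro j
    rw [Matrix.det_apply',
      ← Finset.add_sum_erase _ _ (Finset.mem_univ (1 : Equiv.Perm (Fin n)))]
    congr 1
    have : ∀ i : Fin n, (M.updateCol j b) i i = if i = j then b i else 1 := by
      intro i
      rw [Matrix.updateCol_apply]
      by_cases h : i = j
      · rw [if_pos h, if_pos h]
      · rw [if_neg h, if_neg h, hMdiag]
    simp only [Equiv.Perm.one_apply, this, Finset.prod_ite_eq',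
      if_pos (Finset.mem_univ j)]
    simp [hb]
  have hδj : ∀ j : Fin n, ∀ r : ℝ, 0 < r →
      |∑ σ ∈ Finset.univ.erase (1 : Equiv.Perm (Fin n)),
        (((Equiv.Perm.sign σ : ℤ) : F) * ∏ i, (M.updateCol j b) (σ i) i)| < φ r := by
    intro j
    refine aux_inf_sum φ hφpos _ _ ?_
    intro σ hσmem r hr
    have hσ : σ ≠ 1 := (Finset.mem_erase.mp hσmem).1
    obtain ⟨i, hij, hi⟩ := hmove σ j hσ
    have hfac : ∀ i' : Fin n, |(M.updateCol j b) (σ i') i'| ≤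
        (if i' = i then ε i else 1) * (if i' = j then φ C else 1) := by
      intro i'
      rw [Matrix.updateCol_apply]
      by_cases hj : i' = j
      · rw [if_pos hj, if_pos hj, if_neg (by rw [hj]; exact fun h => hij h.symm),
          one_mul]
        exact hbC _
      · rw [if_neg hj, if_neg hj, mul_one,
          abs_of_pos (hMpos _ _)]
        by_cases h : i' = i
        · subst h; rw [if_pos rfl]; exact hMoff _ _ hi
        · rw [if_neg h]; exact hMle1 _ _
    have hple : |∏ i', (M.updateCol j b) (σ i') i'| ≤ ε i * φ C := by
      rw [Finset.abs_prod]
      calc ∏ i', |(M.updateCol j b) (σ i') i'|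
          ≤ ∏ i', ((if i' = i then ε i else 1) * (if i' = j then φ C else 1)) :=
            Finset.prod_le_prod (fun _ _ => abs_nonneg _) (fun i' _ => hfac i')
        _ = ε i * φ C := by
            rw [Finset.prod_mul_distrib, Finset.prod_ite_eq',
              if_pos (Finset.mem_univ i), Finset.prod_ite_eq',
              if_pos (Finset.mem_univ j)]
    have habs : |((Equiv.Perm.sign σ : ℤ) : F) * ∏ i', (M.updateCol j b) (σ i') i'|
        = |∏ i', (M.updateCol j b) (σ i') i'| := by
      rw [abs_mul, habs_sign, one_mul]
    rw [habs]
    refine lt_of_le_of_lt hple ?_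
    have hεabs : ∀ r' : ℝ, 0 < r' → |ε i| < φ r' := fun r' hr' => by
      rw [abs_of_pos (hpos i)]; exact hεinf i r' hr'
    have := hinfmul (ε i) (φ C) C hCpos hεabs
      (le_of_eq (abs_of_pos (hφpos C hCpos))) r hr
    rwa [abs_of_pos (mul_pos (hpos i) (hφpos C hCpos))] at this
  -- main case split
  by_cases hwpos : ∀ i, 0 < w i
  · have hex : ∃ lam : Fin n → F, (∀ j, 0 < lam j) ∧
        (∀ r, φ (w r) = ∑ j, lam j * M r j) := by
      refine ⟨fun j => (M.updateCol j b).det / M.det, ?_, ?_⟩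
      · intro j
        refine div_pos ?_ hdetpos
        rw [hN1 j]
        have h := hδj j (w j) (hwpos j)
        have h' := abs_lt.mp h
        linarith [h'.1]
      · intro r
        have hc := congrFun (Matrix.mulVec_cramer M b) r
        rw [Matrix.mulVec, dotProduct] at hc
        have hsum : ∑ j, (M.updateCol j b).det / M.det * M r j
            = (∑ j, M r j * M.cramer b j) / M.det := by
          rw [Finset.sum_div]
          refine Finset.sum_congr rfl fun j _ => ?_
          rw [Matrix.cramer_apply]; ring
        rw [hsum, hc, Pi.smul_apply, smul_eq_mul,
          mul_div_cancel_left₀ _ hdetne]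
    rw [if_pos hex, if_pos hdetpos, if_pos hwpos]
  · have hnex : ¬ ∃ lam : Fin n → F, (∀ j, 0 < lam j) ∧
        (∀ r, φ (w r) = ∑ j, lam j * M r j) := by
      rintro ⟨lam, hlam, heq⟩
      refine hwpos fun i => ?_
      have h1 : 0 < φ (w i) := by
        rw [heq i]
        exact Finset.sum_pos (fun j _ => mul_pos (hlam j) (hMpos i j))
          Finset.univ_nonempty
      by_contra hle
      push_neg at hle
      have := hφmono hle
      rw [map_zero] at this
      linarith
    rw [if_neg hnex, if_neg hwpos]
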